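/- If P ∈ R^{n×n} is an idempotent matrix (P² = P) with P ≠ 0 and P ≠ I, then ‖I − P‖₂ = ‖P‖₂, where ‖·‖₂ is the spectral norm. -/

import Mathlib

open Matrix
open scoped Matrix.Norms.L2Operator

/-- Euclidean norm of a vector in `Fin n → ℝ`. -/
noncomputable def euclNorm {n : ℕ} (v : Fin n → ℝ) : ℝ :=
  ‖(WithLp.equiv 2 (Fin n → ℝ)).symm v‖

/-- Smallest singular value: infimum of `‖M x‖₂` over unit vectors `x`. -/
noncomputable def sigmaMin {m r : ℕ} (M : Matrix (Fin m) (Fin r) ℝ) : ℝ :=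
  sInf {t | ∃ x : Fin r → ℝ, euclNorm x = 1 ∧ t = euclNorm (M.mulVec x)}

/-- Largest singular value: supremum of `‖M x‖₂` over unit vectors `x`. -/
noncomputable def sigmaMax {m r : ℕ} (M : Matrix (Fin m) (Fin r) ℝ) : ℝ :=
  sSup {t | ∃ x : Fin r → ℝ, euclNorm x = 1 ∧ t = euclNorm (M.mulVec x)}

/-- Moore–Penrose pseudoinverse of a full-column-rank matrix. -/
noncomputable def pinv {m r : ℕ} (M : Matrix (Fin m) (Fin r) ℝ) :
    Matrix (Fin r) (Fin m) ℝ :=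
  (Mᵀ * M)⁻¹ * Mᵀ

/-- `S` is a row-subsampling matrix: a row-submatrix of the identity. -/
def IsSubsampling {s n : ℕ} (S : Matrix (Fin s) (Fin n) ℝ) : Prop :=
  ∃ f : Fin s → Fin n, Function.Injective f ∧ ∀ i j, S i j = if j = f i then 1 else 0

section Key

variable {E : Type*} [NormedAddCommGroup E] [InnerProductSpace ℝ E]

private lemma idem_norm_le (f : E →L[ℝ] E) (hf : f * f = f) (h1 : f ≠ 1) :
    ‖f‖ ≤ ‖1 - f‖ := by
  set g : E →L[ℝ] E := 1 - f with hgdef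
  have hgapp : ∀ y, g y = y - f y := fun y => by simp [hgdef]
  have hff : ∀ y, f (f y) = f y := fun y => by
    rw [← ContinuousLinearMap.mul_apply, hf]
  have hfg : ∀ y, f (g y) = 0 := fun y => by
    rw [hgapp, map_sub, hff, sub_self]
  have hgf : ∀ y, g (f y) = 0 := fun y => by
    rw [hgapp, hff, sub_self]
  have hgg : ∀ y, g (g y) = g y := fun y => by
    rw [hgapp (g y), hfg, sub_zero]
  have hg0 : g ≠ 0 := by
    intro h
    apply h1
    have h' : (1 : E →L[ℝ] E) - f = 0 := h
    exact (sub_eq_zero.mp h').symm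
  obtain ⟨y, hy⟩ : ∃ y, g y ≠ 0 := by
    by_contra h
    push_neg at h
    exact hg0 (ContinuousLinearMap.ext fun y => by rw [h y]; rfl)
  have hgy : 0 < ‖g y‖ := norm_pos_iff.mpr hy
  have hg1 : 1 ≤ ‖g‖ := by
    have h := g.le_opNorm (g y)
    rw [hgg y] at h
    nlinarith
  refine f.opNorm_le_bound (norm_nonneg g) fun x => ?_
  by_cases hu : f x = 0
  · rw [hu, norm_zero]; positivity
  by_cases hv : g x = 0
  · have hx : f x = x := by
      have h' := hgapp x
      rw [hv] at h'
      exact (sub_eq_zero.mp h'.symm).symm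
    rw [hx]
    nlinarith [norm_nonneg x]
  · set u := f x with hudef
    set v := g x with hvdef
    have ha : 0 < ‖u‖ := norm_pos_iff.mpr hu
    have hb : 0 < ‖v‖ := norm_pos_iff.mpr hv
    set a := ‖u‖ ^ 2 with hA
    set b := ‖v‖ ^ 2 with hB
    have ha' : 0 < a := by positivity
    have hb' : 0 < b := by positivity
    set c : ℝ := inner ℝ u v with hC
    have hxuv : x = u + v := by rw [hvdef, hgapp x]; abel
    have hnx : ‖x‖ ^ 2 = a + b + 2 * c := by
      rw [hxuv, @norm_add_sq_real]; ring
    set x' : E := a⁻¹ • u + b⁻¹ • v with hx'def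
    have hgu : g u = 0 := hgf x
    have hgv : g v = v := hgg x
    have hgx' : g x' = b⁻¹ • v := by
      rw [hx'def, map_add, g.map_smul, g.map_smul, hgu, hgv, smul_zero, zero_add]
    have hnx' : ‖x'‖ ^ 2 = a⁻¹ ^ 2 * a + b⁻¹ ^ 2 * b + 2 * (a⁻¹ * b⁻¹ * c) := by
      rw [hx'def, @norm_add_sq_real, norm_smul, norm_smul, real_inner_smul_left,
        real_inner_smul_right, Real.norm_eq_abs, Real.norm_eq_abs,
        abs_of_pos (by positivity), abs_of_pos (by positivity), mul_pow, mul_pow,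
        ← hA, ← hB, ← hC]
      ring
    have hnx'2 : a * b * ‖x'‖ ^ 2 = ‖x‖ ^ 2 := by
      have ha'' : a ≠ 0 := ha'.ne'
      have hb'' : b ≠ 0 := hb'.ne'
      rw [hnx', hnx]
      field_simp
      ring
    have hineq : ‖g x'‖ ≤ ‖g‖ * ‖x'‖ := g.le_opNorm x'
    have hgx'n : ‖g x'‖ ^ 2 = b⁻¹ := by
      rw [hgx', norm_smul, Real.norm_eq_abs, abs_of_pos (by positivity), mul_pow, ← hB]
      field_simp
    have hsq : ‖g x'‖ ^ 2 ≤ (‖g‖ * ‖x'‖) ^ 2 :=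
      pow_le_pow_left₀ (norm_nonneg _) hineq 2
    rw [hgx'n, mul_pow] at hsq
    have key : a ≤ ‖g‖ ^ 2 * ‖x‖ ^ 2 := by
      have h2 : a * b * b⁻¹ ≤ a * b * (‖g‖ ^ 2 * ‖x'‖ ^ 2) :=
        mul_le_mul_of_nonneg_left hsq (by positivity)
      rw [mul_assoc, mul_inv_cancel₀ (ne_of_gt hb'), mul_one] at h2
      calc a ≤ a * b * (‖g‖ ^ 2 * ‖x'‖ ^ 2) := h2
        _ = ‖g‖ ^ 2 * (a * b * ‖x'‖ ^ 2) := by ring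
        _ = ‖g‖ ^ 2 * ‖x‖ ^ 2 := by rw [hnx'2]
    have hfx : ‖f x‖ ^ 2 = a := by rw [hA, hudef]
    refine le_of_pow_le_pow_left₀ (n := 2) (by norm_num) (by positivity) ?_
    rw [hfx, mul_pow]
    exact key

end Key

/-- for a nontrivial idempotent, `‖I − P‖₂ = ‖P‖₂`. -/
theorem stmt4 {n : ℕ} (P : Matrix (Fin n) (Fin n) ℝ)
    (hP : P * P = P) (h0 : P ≠ 0) (h1 : P ≠ 1) :
    ‖(1 : Matrix (Fin n) (Fin n) ℝ) - P‖ = ‖P‖ := by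
  set e := Matrix.toEuclideanCLM (𝕜 := ℝ) (n := Fin n) with he
  set T := e P with hT
  have hTT : T * T = T := by rw [hT, ← _root_.map_mul e P P, hP]
  have hT0 : T ≠ 0 := by
    rw [hT, ← _root_.map_zero e]
    exact fun h => h0 (e.injective h)
  have hT1 : T ≠ 1 := by
    rw [hT, ← _root_.map_one e]
    exact fun h => h1 (e.injective h)
  have hQQ : (1 - T) * (1 - T) = 1 - T := by
    rw [mul_sub, sub_mul, sub_mul, one_mul, mul_one, hTT]; abel
  have hQ1 : 1 - T ≠ 1 := fun h => hT0 (sub_eq_self.mp h)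
  have hmap : toEuclideanCLM (𝕜 := ℝ) (n := Fin n) (1 - P) = 1 - T := by
    rw [map_sub e, _root_.map_one e, hT]
  rw [Matrix.cstar_norm_def, Matrix.cstar_norm_def, hmap, ← he, ← hT]
  refine le_antisymm ?_ ?_
  · have h := idem_norm_le (1 - T) hQQ hQ1
    rwa [sub_sub_cancel] at h
  · exact idem_norm_le T hTT hT1
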